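/- Let $T_1 > 0$ and $T_2, T_3 < 0$, and define $\bar{f}(p) = 2p^3 + (T_1+T_2+T_3)p^2 - T_1 T_2 T_3$. If $\bar{f}(-T_1) < 0$, $-\frac{T_1+T_2+T_3}{3} < 0$, and $\bar{f}(-\frac{T_1+T_2+T_3}{3}) > 0$, then $\bar{f}$ has exactly two roots in the open interval $(-T_1, 0)$. -/

import Mathlib

theorem stmt_2 (T1 T2 T3 : ℝ) (h1 : 0 < T1) (h2 : T2 < 0) (h3 : T3 < 0)
    (f : ℝ → ℝ) (hf : ∀ p, f p = 2 * p ^ 3 + (T1 + T2 + T3) * p ^ 2 - T1 * T2 * T3)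
    (ha : f (-T1) < 0) (hb : -(T1 + T2 + T3) / 3 < 0)
    (hc : 0 < f (-(T1 + T2 + T3) / 3)) :
    ∃ p q : ℝ, p ≠ q ∧ p ∈ Set.Ioo (-T1) 0 ∧ q ∈ Set.Ioo (-T1) 0 ∧
      f p = 0 ∧ f q = 0 ∧
      ∀ r ∈ Set.Ioo (-T1) 0, f r = 0 → r = p ∨ r = q := by
  have hfe : f = fun p => 2 * p ^ 3 + (T1 + T2 + T3) * p ^ 2 - T1 * T2 * T3 := funext hf
  subst hfe
  set S := T1 + T2 + T3 with hS
  set C := T1 * T2 * T3 with hC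
  set m := -S / 3 with hm
  have hSpos : 0 < S := by linarith [hb]
  have hmT1 : -T1 < m := by
    have : T2 + T3 < 0 := by linarith
    rw [hm, hS]; linarith
  have hm0 : m < 0 := hb
  have hf0 : (fun p => 2 * p ^ 3 + S * p ^ 2 - C) 0 < 0 := by
    have : 0 < T2 * T3 := mul_pos_of_neg_of_neg h2 h3
    simp [hC]; nlinarith
  have hcont : Continuous (fun p : ℝ => 2 * p ^ 3 + S * p ^ 2 - C) := by continuity
  have hder : ∀ p : ℝ, HasDerivAt (fun p => 2 * p ^ 3 + S * p ^ 2 - C)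
      (2 * p * (3 * p + S)) p := by
    intro p
    have h := (((hasDerivAt_pow 3 p).const_mul 2).add
      ((hasDerivAt_pow 2 p).const_mul S)).sub_const C
    refine h.congr_deriv ?_
    norm_num
    ring
  have hderiv : deriv (fun p : ℝ => 2 * p ^ 3 + S * p ^ 2 - C)
      = fun p => 2 * p * (3 * p + S) := funext fun p => (hder p).deriv
  have hmono : StrictMonoOn (fun p : ℝ => 2 * p ^ 3 + S * p ^ 2 - C) (Set.Icc (-T1) m) := by
    apply strictMonoOn_of_deriv_pos (convex_Icc _ _) hcont.continuousOn
    intro x hx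
    rw [interior_Icc] at hx
    rw [hderiv]
    have hx1 : x < 0 := hx.2.trans hm0
    have hx2 : 3 * x + S < 0 := by
      have := hx.2; rw [hm] at this; linarith
    show 0 < 2 * x * (3 * x + S)
    nlinarith
  have hanti : StrictAntiOn (fun p : ℝ => 2 * p ^ 3 + S * p ^ 2 - C) (Set.Icc m 0) := by
    apply strictAntiOn_of_deriv_neg (convex_Icc _ _) hcont.continuousOn
    intro x hx
    rw [interior_Icc] at hx
    rw [hderiv]
    have hx1 : x < 0 := hx.2
    have hx2 : 0 < 3 * x + S := by
      have := hx.1; rw [hm] at this; linarith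
    show 2 * x * (3 * x + S) < 0
    nlinarith
  -- root in (-T1, m)
  obtain ⟨p, hpmem, hp0⟩ : ∃ p ∈ Set.Ioo (-T1) m,
      (fun p => 2 * p ^ 3 + S * p ^ 2 - C) p = 0 := by
    have := intermediate_value_Ioo hmT1.le (hcont.continuousOn
      (s := Set.Icc (-T1) m))
    have h0 : (0 : ℝ) ∈ Set.Ioo ((fun p => 2 * p ^ 3 + S * p ^ 2 - C) (-T1))
        ((fun p => 2 * p ^ 3 + S * p ^ 2 - C) m) := ⟨ha, hc⟩
    obtain ⟨p, hp, hpe⟩ := this h0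
    exact ⟨p, hp, hpe⟩
  -- root in (m, 0)
  obtain ⟨q, hqmem, hq0⟩ : ∃ q ∈ Set.Ioo m 0,
      (fun p => 2 * p ^ 3 + S * p ^ 2 - C) q = 0 := by
    have := intermediate_value_Ioo' hm0.le (hcont.continuousOn
      (s := Set.Icc m 0))
    have h0 : (0 : ℝ) ∈ Set.Ioo ((fun p => 2 * p ^ 3 + S * p ^ 2 - C) 0)
        ((fun p => 2 * p ^ 3 + S * p ^ 2 - C) m) := ⟨hf0, hc⟩
    obtain ⟨q, hq, hqe⟩ := this h0
    exact ⟨q, hq, hqe⟩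
  refine ⟨p, q, ?_, ⟨hpmem.1, hpmem.2.trans hm0⟩, ⟨hmT1.trans hqmem.1, hqmem.2⟩,
    hp0, hq0, ?_⟩
  · exact ne_of_lt (hpmem.2.trans hqmem.1)
  · intro r hr hr0
    rcases lt_trichotomy r m with hrm | hrm | hrm
    · left
      exact hmono.injOn ⟨hr.1.le, hrm.le⟩ ⟨hpmem.1.le, hpmem.2.le⟩ (hr0.trans hp0.symm)
    · exfalso
      rw [hrm] at hr0
      exact absurd hr0 (ne_of_gt hc)
    · right
      exact hanti.injOn ⟨hrm.le, hr.2.le⟩ ⟨hqmem.1.le, hqmem.2.le⟩ (hr0.trans hq0.symm)
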